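/- For a bipartite NPPT density operator ρ_AB (one whose partial transpose ρ^{T_A} has a negative eigenvalue), the optimal decomposable entanglement witness is (up to normalization) P^{T_A}, where P is the orthogonal projector onto the eigenspace of the minimum eigenvalue of ρ^{T_A}; consequently inf over decomposable witnesses of Tr(Wρ) is proportional to λ_min(ρ^{T_A}). -/

import Mathlib

open Matrix BigOperators
open scoped ComplexOrder

noncomputable section

/-- Index type of the bipartite Hilbert space `H_A ⊗ H_B`. -/
abbrev BIdx (a b : ℕ) := Fin a × Fin b

/-- Partial transpose on the A factor: `(X^{T_A})_{(i,k),(j,l)} = X_{(j,k),(i,l)}`. -/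
def ptA {a b : ℕ} (X : Matrix (BIdx a b) (BIdx a b) ℂ) : Matrix (BIdx a b) (BIdx a b) ℂ :=
  fun p q => X (q.1, p.2) (p.1, q.2)

/-- Kronecker product of a matrix on `H_A` and a matrix on `H_B`. -/
def kron {a b : ℕ} (A : Matrix (Fin a) (Fin a) ℂ) (B : Matrix (Fin b) (Fin b) ℂ) :
    Matrix (BIdx a b) (BIdx a b) ℂ :=
  fun p q => A p.1 q.1 * B p.2 q.2

/-- A density operator: positive semidefinite with unit trace. -/
def IsDensity {m : Type*} [Fintype m] (ρ : Matrix m m ℂ) : Prop :=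
  ρ.PosSemidef ∧ ρ.trace = 1

/-- The set of separable bipartite states. -/
def SepSet2 (a b : ℕ) : Set (Matrix (BIdx a b) (BIdx a b) ℂ) :=
  convexHull ℝ { σ | ∃ A B, IsDensity A ∧ IsDensity B ∧ σ = kron A B }

/-- An entanglement witness: unit-trace Hermitian, nonnegative on all separable states. -/
def IsWitness2 {a b : ℕ} (W : Matrix (BIdx a b) (BIdx a b) ℂ) : Prop :=
  W.IsHermitian ∧ W.trace = 1 ∧ ∀ σ ∈ SepSet2 a b, 0 ≤ ((W * σ).trace).re

/-- The witnessed entanglement `E_W(ρ) = max {0, -inf_W Tr(Wρ)}`. -/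
def Ew2 {a b : ℕ} (ρ : Matrix (BIdx a b) (BIdx a b) ℂ) : ℝ :=
  max 0 (sSup { x : ℝ | ∃ W, IsWitness2 W ∧ x = -(((W * ρ).trace).re) })

/-- A decomposable entanglement witness: `W = pP + (1-p)Q^{T_A}`, unit trace. -/
def IsDecompWitness {a b : ℕ} (W : Matrix (BIdx a b) (BIdx a b) ℂ) : Prop :=
  W.trace = 1 ∧ ∃ p : ℝ, 0 ≤ p ∧ p ≤ 1 ∧
    ∃ P Q : Matrix (BIdx a b) (BIdx a b) ℂ, P.PosSemidef ∧ Q.PosSemidef ∧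
      W = p • P + (1 - p) • ptA Q

/-- The decomposable witnessed entanglement. -/
def EdW {a b : ℕ} (ρ : Matrix (BIdx a b) (BIdx a b) ℂ) : ℝ :=
  max 0 (sSup { x : ℝ | ∃ W, IsDecompWitness W ∧ x = -(((W * ρ).trace).re) })


lemma ptA_ptA {a b : ℕ} (X : Matrix (BIdx a b) (BIdx a b) ℂ) : ptA (ptA X) = X := rfl

lemma trace_ptA {a b : ℕ} (X : Matrix (BIdx a b) (BIdx a b) ℂ) : (ptA X).trace = X.trace := rfl

lemma trace_ptA_mul {a b : ℕ} (X Y : Matrix (BIdx a b) (BIdx a b) ℂ) :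
    (ptA X * Y).trace = (X * ptA Y).trace := by
  have tr_eq : ∀ (A B : Matrix (BIdx a b) (BIdx a b) ℂ),
      (A * B).trace = ∑ pq : BIdx a b × BIdx a b, A pq.1 pq.2 * B pq.2 pq.1 := by
    intro A B
    rw [Fintype.sum_prod_type]
    simp [Matrix.trace, Matrix.diag, Matrix.mul_apply]
  rw [tr_eq, tr_eq]
  exact Fintype.sum_bijective
    (fun pq : BIdx a b × BIdx a b => ((pq.2.1, pq.1.2), (pq.1.1, pq.2.2)))
    (Function.Involutive.bijective (fun _ => rfl)) _ _ (fun pq => rfl)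

lemma psd_diag_nonneg {n : Type*} [Fintype n] [DecidableEq n] {M : Matrix n n ℂ}
    (hM : M.PosSemidef) (i : n) : 0 ≤ M i i := by
  exact hM.diag_nonneg

lemma psd_trace_nonneg {n : Type*} [Fintype n] [DecidableEq n] {M : Matrix n n ℂ}
    (hM : M.PosSemidef) : 0 ≤ M.trace :=
  Finset.sum_nonneg fun i _ => psd_diag_nonneg hM i

lemma trace_mul_psd_nonneg {n : Type*} [Fintype n] [DecidableEq n] {X Y : Matrix n n ℂ}
    (hX : X.PosSemidef) (hY : Y.PosSemidef) : 0 ≤ (X * Y).trace := by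
  open scoped MatrixOrder in
  have hS : (CFC.sqrt X).PosSemidef := (CFC.sqrt_nonneg X).posSemidef
  open scoped MatrixOrder in
  have hXe : CFC.sqrt X * CFC.sqrt X = X := CFC.sqrt_mul_sqrt_self X hX.nonneg
  have h2 : ((CFC.sqrt X)ᴴ * Y * CFC.sqrt X).trace = (X * Y).trace := by
    rw [hS.1, Matrix.mul_assoc, Matrix.trace_mul_comm, Matrix.mul_assoc, hXe,
      Matrix.trace_mul_comm]
  rw [← h2]
  exact psd_trace_nonneg (hY.conjTranspose_mul_mul_same _)

lemma psd_smul' {n : Type*} [Fintype n] {M : Matrix n n ℂ} (hM : M.PosSemidef) {c : ℝ}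
    (hc : 0 ≤ c) : (c • M).PosSemidef := by
  exact hM.smul hc

lemma sub_smul_psd {n : Type*} [Fintype n] [DecidableEq n] {A : Matrix n n ℂ}
    (hA : A.IsHermitian) (lam : ℝ) (h : ∀ i, lam ≤ hA.eigenvalues i) :
    (A - (lam : ℂ) • 1).PosSemidef := by
  have hU : (hA.eigenvectorUnitary : Matrix n n ℂ) * star (hA.eigenvectorUnitary : Matrix n n ℂ) = 1 :=
    (Matrix.mem_unitaryGroup_iff).mp hA.eigenvectorUnitary.2
  have key : A - (lam : ℂ) • 1 =
      (hA.eigenvectorUnitary : Matrix n n ℂ) *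
        Matrix.diagonal (fun i => ((hA.eigenvalues i - lam : ℝ) : ℂ)) *
        star (hA.eigenvectorUnitary : Matrix n n ℂ) := by
    conv_lhs => rw [hA.spectral_theorem, Unitary.conjStarAlgAut_apply]
    have h1 : (lam : ℂ) • (1 : Matrix n n ℂ) =
        (hA.eigenvectorUnitary : Matrix n n ℂ) * ((lam : ℂ) • 1) *
          star (hA.eigenvectorUnitary : Matrix n n ℂ) := by
      rw [Matrix.mul_smul, Matrix.mul_one, Matrix.smul_mul, hU]
    rw [h1, ← Matrix.sub_mul, ← Matrix.mul_sub]
    congr 2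
    rw [Matrix.smul_one_eq_diagonal, Matrix.diagonal_sub]
    congr 1
    funext i
    simp [RCLike.ofReal]
  rw [key, Matrix.star_eq_conjTranspose]
  refine (Matrix.posSemidef_diagonal_iff.mpr fun i => ?_).mul_mul_conjTranspose_same _
  exact Complex.zero_le_real.mpr (sub_nonneg.mpr (h i))

lemma trace_mul_lower {n : Type*} [Fintype n] [DecidableEq n] {A Q : Matrix n n ℂ}
    (hA : A.IsHermitian) (lam : ℝ) (h : ∀ i, lam ≤ hA.eigenvalues i) (hQ : Q.PosSemidef) :
    lam * Q.trace.re ≤ ((Q * A).trace).re := by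
  have h0 := trace_mul_psd_nonneg hQ (sub_smul_psd hA lam h)
  have hexp : (Q * (A - (lam : ℂ) • 1)).trace = (Q * A).trace - (lam : ℂ) * Q.trace := by
    rw [Matrix.mul_sub, Matrix.trace_sub, Matrix.mul_smul, Matrix.mul_one, Matrix.trace_smul,
      smul_eq_mul]
  rw [hexp] at h0
  have := (Complex.nonneg_iff.mp h0).1
  simp only [Complex.sub_re, Complex.mul_re, Complex.ofReal_re, Complex.ofReal_im, zero_mul,
    sub_zero] at this
  linarith

/-- for an NPPT state, the normalized partial transpose of the projector
onto the minimal eigenspace of `ρ^{T_A}` is the optimal decomposable witness, and the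
infimum of `Tr(Wρ)` over decomposable witnesses equals `λ_min(ρ^{T_A})`. -/
theorem optimal_decomposable_witness
    {a b : ℕ} (ρ : Matrix (BIdx a b) (BIdx a b) ℂ) (hρ : IsDensity ρ)
    (hH : (ptA ρ).IsHermitian)
    (hNPPT : ∃ i, hH.eigenvalues i < 0)
    (lam : ℝ) (hlam : lam = ⨅ i, hH.eigenvalues i)
    (P : Matrix (BIdx a b) (BIdx a b) ℂ)
    (hPsd : P.PosSemidef) (hproj : P * P = P) (hPne : P ≠ 0)
    (heig : (ptA ρ) * P = (lam : ℂ) • P)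
    (hfull : ∀ v : BIdx a b → ℂ, (ptA ρ).mulVec v = (lam : ℂ) • v → P.mulVec v = v) :
    IsDecompWitness ((P.trace.re)⁻¹ • ptA P) ∧
    (((((P.trace.re)⁻¹ • ptA P) * ρ).trace).re = lam) ∧
    sInf { x : ℝ | ∃ W, IsDecompWitness W ∧ x = ((W * ρ).trace).re } = lam := by
  classical
  -- trace of P is a positive real
  have htrnn := psd_trace_nonneg hPsd
  have htr : P.trace = (P.trace.re : ℂ) := by
    obtain ⟨-, him⟩ := Complex.nonneg_iff.mp htrnn
    exact Complex.ext (by simp) (by simp [← him])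
  obtain ⟨i0, j0, hne⟩ : ∃ i j, P i j ≠ 0 := by
    by_contra hcon; push_neg at hcon
    exact hPne (by ext i j; simpa using hcon i j)
  have htre : P.trace.re = ∑ j, ∑ i, Complex.normSq (P i j) := by
    have hkey : P.trace = (Pᴴ * P).trace := by rw [hPsd.1, hproj]
    rw [hkey]
    rw [Matrix.trace]
    rw [Complex.re_sum]
    refine Finset.sum_congr rfl fun j _ => ?_
    rw [show (Pᴴ * P).diag j = ∑ i, Pᴴ j i * P i j from rfl, Complex.re_sum]
    refine Finset.sum_congr rfl fun i _ => ?_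
    simp [Matrix.conjTranspose_apply, Complex.mul_re, Complex.normSq_apply]
  have hpos : 0 < P.trace.re := by
    rw [htre]
    refine Finset.sum_pos' (fun j _ => Finset.sum_nonneg fun i _ => Complex.normSq_nonneg _)
      ⟨j0, Finset.mem_univ _, Finset.sum_pos' (fun i _ => Complex.normSq_nonneg _)
        ⟨i0, Finset.mem_univ _, Complex.normSq_pos.mpr hne⟩⟩
  -- the candidate witness
  have htrace1 : ((P.trace.re)⁻¹ • ptA P).trace = 1 := by
    rw [Matrix.trace_smul, trace_ptA]
    nth_rewrite 2 [htr]
    rw [Complex.real_smul, ← Complex.ofReal_mul, inv_mul_cancel₀ hpos.ne', Complex.ofReal_one]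
  have hwit : IsDecompWitness ((P.trace.re)⁻¹ • ptA P) := by
    refine ⟨htrace1, 0, le_refl 0, zero_le_one, 0, (P.trace.re)⁻¹ • P,
      ⟨by simp [Matrix.IsHermitian], fun x => by simp⟩,
      psd_smul' hPsd (inv_nonneg.mpr hpos.le), ?_⟩
    simp only [zero_smul, sub_zero, one_smul, zero_add]
    rfl
  -- value of the witness on ρ
  have hcalc : ((((P.trace.re)⁻¹ • ptA P) * ρ).trace) = (lam : ℂ) := by
    rw [Matrix.smul_mul, Matrix.trace_smul, trace_ptA_mul, Matrix.trace_mul_comm, heig,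
      Matrix.trace_smul]
    nth_rewrite 2 [htr]
    rw [smul_eq_mul, Complex.real_smul, ← Complex.ofReal_mul, ← Complex.ofReal_mul]
    norm_cast
    rw [mul_comm lam, ← mul_assoc, inv_mul_cancel₀ hpos.ne', one_mul]
  have hval : ((((P.trace.re)⁻¹ • ptA P) * ρ).trace).re = lam := by rw [hcalc]; simp
  refine ⟨hwit, hval, ?_⟩
  -- lam bounds eigenvalues from below
  have hbd : ∀ i, lam ≤ hH.eigenvalues i := by
    intro i
    rw [hlam]
    exact ciInf_le (Set.Finite.bddBelow (Set.finite_range _)) i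
  obtain ⟨ineg, hineg⟩ := hNPPT
  have hlamneg : lam < 0 := lt_of_le_of_lt (hbd ineg) hineg
  have hmem : lam ∈ { x : ℝ | ∃ W, IsDecompWitness W ∧ x = ((W * ρ).trace).re } :=
    ⟨_, hwit, hval.symm⟩
  have hlb : ∀ x ∈ { x : ℝ | ∃ W, IsDecompWitness W ∧ x = ((W * ρ).trace).re }, lam ≤ x := by
    rintro x ⟨W', ⟨htrW, p, hp0, hp1, P', Q', hP', hQ', rfl⟩, rfl⟩
    have ht1 : 0 ≤ ((P' * ρ).trace).re := (Complex.nonneg_iff.mp (trace_mul_psd_nonneg hP' hρ.1)).1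
    have ht2 : lam * Q'.trace.re ≤ ((Q' * ptA ρ).trace).re := trace_mul_lower hH lam hbd hQ'
    have htrp : 0 ≤ P'.trace.re := (Complex.nonneg_iff.mp (psd_trace_nonneg hP')).1
    have htrq : 0 ≤ Q'.trace.re := (Complex.nonneg_iff.mp (psd_trace_nonneg hQ')).1
    have h1 : p * P'.trace.re + (1 - p) * Q'.trace.re = 1 := by
      have := congrArg Complex.re htrW
      simpa [Matrix.trace_add, Matrix.trace_smul, trace_ptA, Complex.add_re, Complex.smul_re,
        smul_eq_mul] using this
    have hx : (((p • P' + (1 - p) • ptA Q') * ρ).trace).re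
        = p * ((P' * ρ).trace).re + (1 - p) * ((ptA Q' * ρ).trace).re := by
      simp [Matrix.add_mul, Matrix.smul_mul, Matrix.trace_add, Matrix.trace_smul,
        Complex.add_re, Complex.smul_re, smul_eq_mul]
    have hq : ((ptA Q' * ρ).trace).re = ((Q' * ptA ρ).trace).re := by rw [trace_ptA_mul]
    rw [hx, hq]
    nlinarith [mul_nonneg hp0 ht1, mul_nonneg hp0 htrp,
      mul_le_mul_of_nonneg_left ht2 (sub_nonneg.mpr hp1),
      mul_nonneg (sub_nonneg.mpr hp1) htrq]
  exact le_antisymm (csInf_le ⟨lam, fun x hx => hlb x hx⟩ hmem) (le_csInf ⟨lam, hmem⟩ hlb)
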